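/- Let f be differentiable on an open interval containing [a,b], a < b, with |f'| log-convex on [a,b] and |f'(a)|, |f'(b)| > 0, |f'(a)| ≠ |f'(b)|. Then |(1/(b-a)) ∫_a^b f(x) dx − f((a+b)/2)| ≤ (b-a)·[ (|f'(b)|^{1/2} − |f'(a)|^{1/2})/(log|f'(b)| − log|f'(a)|) ]². -/

import Mathlib

open MeasureTheory intervalIntegral

set_option maxHeartbeats 1000000 in
theorem hh_left_log_convex
    (I : Set ℝ) (hIopen : IsOpen I) (hIconn : I.OrdConnected)
    (f f' : ℝ → ℝ) (a b : ℝ) (hab : a < b) (hsub : Set.Icc a b ⊆ I)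
    (hf : ∀ x ∈ I, HasDerivAt f (f' x) x)
    (ha : 0 < |f' a|) (hb : 0 < |f' b|) (hne : |f' a| ≠ |f' b|)
    (hlog : ∀ t ∈ Set.Icc (0 : ℝ) 1,
      |f' ((1 - t) * a + t * b)| ≤ |f' a| ^ (1 - t) * |f' b| ^ t) :
    |(1 / (b - a)) * (∫ x in a..b, f x) - f ((a + b) / 2)|
      ≤ (b - a) *
        ((|f' b| ^ ((1 : ℝ) / 2) - |f' a| ^ ((1 : ℝ) / 2)) /
          (Real.log |f' b| - Real.log |f' a|)) ^ 2 := by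
  have hba : (0 : ℝ) < b - a := by linarith
  set m : ℝ := (a + b) / 2 with hm
  have ham : a ≤ m := by rw [hm]; linarith
  have hmb : m ≤ b := by rw [hm]; linarith
  set α : ℝ := Real.log |f' a| with hα
  set β : ℝ := Real.log |f' b| with hβ
  have hLne : β - α ≠ 0 := by
    intro h
    have hαβ : α = β := by linarith
    apply hne
    rw [← Real.exp_log ha, ← Real.exp_log hb, ← hα, ← hβ, hαβ]
  set c : ℝ := (β - α) / (b - a) with hc
  have hcne : c ≠ 0 := div_ne_zero hLne (ne_of_gt hba)
  set g : ℝ → ℝ := fun x => Real.exp (α + c * (x - a)) with hg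
  -- derivative of g
  have hg_deriv : ∀ x : ℝ, HasDerivAt g (c * g x) x := by
    intro x
    have h1 : HasDerivAt (fun x : ℝ => α + c * (x - a)) c x := by
      simpa using (((hasDerivAt_id x).sub_const a).const_mul c).const_add α
    have := h1.exp
    simpa [hg, mul_comm] using this
  have hg_cont : Continuous g := by
    rw [hg]; fun_prop
  -- pointwise bound
  have hbound : ∀ x ∈ Set.Icc a b, |f' x| ≤ g x := by
    intro x hx
    set t : ℝ := (x - a) / (b - a) with ht
    have ht0 : 0 ≤ t := div_nonneg (by linarith [hx.1]) (le_of_lt hba)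
    have ht1 : t ≤ 1 := by
      rw [ht, div_le_one hba]; linarith [hx.2]
    have hx' : (1 - t) * a + t * b = x := by
      rw [ht]; field_simp; ring
    have h := hlog t ⟨ht0, ht1⟩
    rw [hx'] at h
    refine h.trans_eq ?_
    rw [Real.rpow_def_of_pos ha, Real.rpow_def_of_pos hb, ← Real.exp_add, hg]
    congr 1
    have hct : c * (x - a) = t * (β - α) := by
      rw [hc, ht]; field_simp
    rw [← hα, ← hβ, hct]; ring
  -- uniform bound for integrability
  have hMbound : ∀ x ∈ Set.Icc a b, g x ≤ Real.exp (max α β) := by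
    intro x hx
    apply Real.exp_le_exp.mpr
    have hcb : c * (b - a) = β - α := by rw [hc]; field_simp
    rcases le_total 0 c with h | h
    · have : c * (x - a) ≤ c * (b - a) := by
        apply mul_le_mul_of_nonneg_left (by linarith [hx.2]) h
      calc α + c * (x - a) ≤ α + c * (b - a) := by linarith
        _ = β := by rw [hcb]; ring
        _ ≤ max α β := le_max_right _ _
    · have : c * (x - a) ≤ 0 := mul_nonpos_of_nonpos_of_nonneg h (by linarith [hx.1])
      calc α + c * (x - a) ≤ α := by linarith
        _ ≤ max α β := le_max_left _ _
  -- interval integrability of f' on subintervals of [a,b]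
  have hIf' : ∀ p q : ℝ, p ∈ Set.Icc a b → q ∈ Set.Icc a b →
      IntervalIntegrable f' volume p q := by
    intro p q hp hq
    have hub : Set.uIoc p q ⊆ Set.Icc a b := fun x hx =>
      Set.uIcc_subset_Icc hp hq (Set.Ioc_subset_Icc_self hx)
    rw [intervalIntegrable_iff]
    have hmeasset : MeasurableSet (Set.uIoc p q) := measurableSet_uIoc
    have hmeas : AEStronglyMeasurable f' (volume.restrict (Set.uIoc p q)) := by
      refine ((measurable_deriv f).aestronglyMeasurable.restrict).congr ?_
      filter_upwards [ae_restrict_mem hmeasset] with x hx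
      exact (hf x (hsub (hub hx))).deriv
    have hfin : volume (Set.uIoc p q) ≠ ⊤ := by
      rw [Set.uIoc]; exact (measure_Ioc_lt_top).ne
    refine Integrable.mono' (g := fun _ => Real.exp (max α β))
      (integrableOn_const ?_) hmeas ?_
    · rw [Set.uIoc]; exact measure_Ioc_lt_top.ne
    · filter_upwards [ae_restrict_mem hmeasset] with x hx
      rw [Real.norm_eq_abs]
      exact (hbound x (hub hx)).trans (hMbound x (hub hx))
  have hma : m ∈ Set.Icc a b := ⟨ham, hmb⟩
  have haa : a ∈ Set.Icc a b := ⟨le_refl a, le_of_lt hab⟩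
  have hbb : b ∈ Set.Icc a b := ⟨le_of_lt hab, le_refl b⟩
  -- continuity of f on [a,b]
  have hfc : ContinuousOn f (Set.Icc a b) := fun x hx =>
    (hf x (hsub hx)).continuousAt.continuousWithinAt
  have hintf : ∀ p q : ℝ, p ∈ Set.Icc a b → q ∈ Set.Icc a b →
      IntervalIntegrable f volume p q := fun p q hp hq =>
    (hfc.mono (Set.uIcc_subset_Icc hp hq)).intervalIntegrable
  -- integration by parts on [a, m]
  have key1 : ∫ x in a..m, (x - a) * f' x = (m - a) * f m - ∫ x in a..m, f x := by
    have h := intervalIntegral.integral_mul_deriv_eq_deriv_mul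
      (u := fun x => x - a) (u' := fun _ => (1 : ℝ)) (v := f) (v' := f')
      (fun x _ => (hasDerivAt_id x).sub_const a)
      (fun x hx => hf x (hsub (Set.uIcc_subset_Icc haa hma hx)))
      intervalIntegrable_const (hIf' a m haa hma)
    simpa using h
  have key2 : ∫ x in m..b, (x - b) * f' x = (b - m) * f m - ∫ x in m..b, f x := by
    have h := intervalIntegral.integral_mul_deriv_eq_deriv_mul
      (u := fun x => x - b) (u' := fun _ => (1 : ℝ)) (v := f) (v' := f')
      (fun x _ => (hasDerivAt_id x).sub_const b)
      (fun x hx => hf x (hsub (Set.uIcc_subset_Icc hma hbb hx)))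
      intervalIntegrable_const (hIf' m b hma hbb)
    simp at h
    linarith [h]
  have hsplit : (∫ x in a..m, f x) + ∫ x in m..b, f x = ∫ x in a..b, f x :=
    intervalIntegral.integral_add_adjacent_intervals (hintf a m haa hma) (hintf m b hma hbb)
  set K1 : ℝ := ∫ x in a..m, (x - a) * f' x with hK1
  set K2 : ℝ := ∫ x in m..b, (x - b) * f' x with hK2
  have hident : (∫ x in a..b, f x) - (b - a) * f m = -(K1 + K2) := by
    rw [← hsplit, key1, key2]
    ring
  -- exact integrals of (x-a) g and (x-b) g
  have hanti1 : ∀ s : ℝ, ∀ x : ℝ,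
      HasDerivAt (fun x => ((x - s) / c - 1 / c ^ 2) * g x) ((x - s) * g x) x := by
    intro s x
    have h1 : HasDerivAt (fun x : ℝ => (x - s) / c - 1 / c ^ 2) (1 / c) x :=
      (((hasDerivAt_id x).sub_const s).div_const c).sub_const (1 / c ^ 2)
    have h2 := h1.mul (hg_deriv x)
    refine h2.congr_deriv ?_
    field_simp
    ring
  have hcont_sub : ∀ s : ℝ, Continuous fun x : ℝ => x - s := fun s => by fun_prop
  have hgint : ∀ s p q : ℝ, IntervalIntegrable (fun x => (x - s) * g x) volume p q := by
    intro s p q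
    exact ((hcont_sub s).mul hg_cont).intervalIntegrable p q
  have int1 : ∫ x in a..m, (x - a) * g x
      = ((m - a) / c - 1 / c ^ 2) * g m - ((a - a) / c - 1 / c ^ 2) * g a :=
    intervalIntegral.integral_eq_sub_of_hasDerivAt
      (f := fun x => ((x - a) / c - 1 / c ^ 2) * g x) (f' := fun x => (x - a) * g x)
      (fun x _ => hanti1 a x) (hgint a a m)
  have int2 : ∫ x in m..b, (x - b) * g x
      = ((b - b) / c - 1 / c ^ 2) * g b - ((m - b) / c - 1 / c ^ 2) * g m :=
    intervalIntegral.integral_eq_sub_of_hasDerivAt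
      (f := fun x => ((x - b) / c - 1 / c ^ 2) * g x) (f' := fun x => (x - b) * g x)
      (fun x _ => hanti1 b x) (hgint b m b)
  -- compare K1, K2 with the g-integrals
  have habs1 : |K1| ≤ ∫ x in a..m, (x - a) * g x := by
    calc |K1| ≤ ∫ x in a..m, |(x - a) * f' x| :=
          intervalIntegral.abs_integral_le_integral_abs ham
      _ ≤ ∫ x in a..m, (x - a) * g x := by
          apply intervalIntegral.integral_mono_on ham
            (((hIf' a m haa hma).continuousOn_mul
              ((hcont_sub a).continuousOn)).abs)
            (hgint a a m)
          intro x hx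
          rw [abs_mul, abs_of_nonneg (by linarith [hx.1] : (0:ℝ) ≤ x - a)]
          exact mul_le_mul_of_nonneg_left
            (hbound x ⟨hx.1, hx.2.trans hmb⟩) (by linarith [hx.1])
  have habs2 : |K2| ≤ -∫ x in m..b, (x - b) * g x := by
    have h1 : |K2| ≤ ∫ x in m..b, |(x - b) * f' x| :=
      intervalIntegral.abs_integral_le_integral_abs hmb
    have h2 : (∫ x in m..b, |(x - b) * f' x|) ≤ ∫ x in m..b, -((x - b) * g x) := by
      apply intervalIntegral.integral_mono_on hmb
        (((hIf' m b hma hbb).continuousOn_mul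
          ((hcont_sub b).continuousOn)).abs)
        ((((hcont_sub b).mul hg_cont).neg).intervalIntegrable m b)
      intro x hx
      rw [abs_mul, abs_of_nonpos (by linarith [hx.2] : x - b ≤ 0)]
      have := mul_le_mul_of_nonneg_left
        (hbound x ⟨ham.trans hx.1, hx.2⟩) (by linarith [hx.2] : (0:ℝ) ≤ b - x)
      show -(x - b) * |f' x| ≤ -((x - b) * g x)
      nlinarith [this]
    rw [intervalIntegral.integral_neg] at h2
    linarith
  -- values of g at a, m, b
  set sA : ℝ := Real.exp (α / 2) with hsA
  set sB : ℝ := Real.exp (β / 2) with hsB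
  have hga : g a = sA ^ 2 := by
    show Real.exp (α + c * (a - a)) = sA ^ 2
    rw [hsA, sq, ← Real.exp_add]; congr 1; ring
  have hcm : c * (m - a) = (β - α) / 2 := by
    rw [hc, hm]; field_simp; ring
  have hgm : g m = sA * sB := by
    show Real.exp (α + c * (m - a)) = sA * sB
    rw [hcm, hsA, hsB, ← Real.exp_add]
    congr 1; ring
  have hgb : g b = sB ^ 2 := by
    have hcb : c * (b - a) = β - α := by rw [hc]; field_simp
    show Real.exp (α + c * (b - a)) = sB ^ 2
    rw [hcb, hsB, sq, ← Real.exp_add]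
    congr 1; ring
  -- put everything together
  clear_value m α β c g sA sB K1 K2
  have hsum : (∫ x in a..m, (x - a) * g x) + -∫ x in m..b, (x - b) * g x
      = (sB - sA) ^ 2 / c ^ 2 := by
    rw [int1, int2, hga, hgm, hgb]
    have hma2 : m - a = (b - a) / 2 := by rw [hm]; ring
    have hmb2 : m - b = -((b - a) / 2) := by rw [hm]; ring
    rw [hma2, hmb2]
    field_simp
    ring
  have hKsum : |K1 + K2| ≤ (sB - sA) ^ 2 / c ^ 2 := by
    calc |K1 + K2| ≤ |K1| + |K2| := abs_add_le _ _
      _ ≤ _ := by rw [← hsum]; linarith [habs1, habs2]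
  -- rewrite goal
  have hrpa : |f' a| ^ ((1:ℝ)/2) = sA := by
    rw [Real.rpow_def_of_pos ha, hsA, ← hα]; congr 1; ring
  have hrpb : |f' b| ^ ((1:ℝ)/2) = sB := by
    rw [Real.rpow_def_of_pos hb, hsB, ← hβ]; congr 1; ring
  have hgoal_eq : |(1 / (b - a)) * (∫ x in a..b, f x) - f m|
      = (1 / (b - a)) * |(∫ x in a..b, f x) - (b - a) * f m| := by
    have hrw : (1 / (b - a)) * (∫ x in a..b, f x) - f m
        = (1 / (b - a)) * ((∫ x in a..b, f x) - (b - a) * f m) := by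
      field_simp
    rw [hrw, abs_mul, abs_of_pos (by positivity : (0:ℝ) < 1 / (b - a))]
  rw [hgoal_eq, hident, abs_neg, hrpa, hrpb]
  have hfinal : (1 / (b - a)) * ((sB - sA) ^ 2 / c ^ 2)
      = (b - a) * ((sB - sA) / (β - α)) ^ 2 := by
    rw [hc]
    field_simp
  exact le_trans (mul_le_mul_of_nonneg_left hKsum (by positivity)) (le_of_eq hfinal)
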